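/- Let L be a Lie ideal in the upper triangular matrix algebra Tₙ, let f ∈ L, and let d₁,…,dₙ be the minimal diagonal projections (diagonal matrix units). Then for each i, the element dᵢf - dᵢfdᵢ belongs to L. (Proof identity: dᵢf - dᵢfdᵢ = (1/2)([dᵢ,f] + Σ_{j≠i}[dᵢ,[f,dⱼ]]).) -/

import Mathlib

/-- Let `L` be a Lie ideal in the upper triangular matrix algebra `Tₙ`,
`f ∈ L`, and let `dᵢ = eᵢᵢ` be the diagonal matrix units.  Then for each `i`,
`dᵢ f - dᵢ f dᵢ ∈ L`. -/
theorem row_lemma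
    {n : ℕ} (L : Submodule ℂ (Matrix (Fin n) (Fin n) ℂ))
    (hLsub : ∀ x ∈ L, ∀ i j : Fin n, j < i → x i j = 0)
    (hLie : ∀ x ∈ L, ∀ a : Matrix (Fin n) (Fin n) ℂ,
      (∀ i j : Fin n, j < i → a i j = 0) → x * a - a * x ∈ L)
    (f : Matrix (Fin n) (Fin n) ℂ) (hf : f ∈ L) (i : Fin n) :
    Matrix.single i i (1 : ℂ) * f -
      Matrix.single i i (1 : ℂ) * f * Matrix.single i i (1 : ℂ) ∈ L := by
  set d := Matrix.single i i (1 : ℂ) with hd_def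
  have hd : ∀ a b : Fin n, b < a → d a b = 0 := by
    intro a b hab
    simp only [hd_def, Matrix.single, Matrix.of_apply]
    rw [if_neg]
    rintro ⟨rfl, rfl⟩
    exact lt_irrefl _ hab
  have hdd : d * d = d := by
    simp [hd_def, Matrix.single_mul_single_same]
  have hc : f * d - d * f ∈ L := hLie f hf d hd
  have hc2 : (f * d - d * f) * d - d * (f * d - d * f) ∈ L := hLie _ hc d hd
  have key : d * f - d * f * d =
      (2⁻¹ : ℂ) • (((f * d - d * f) * d - d * (f * d - d * f)) - (f * d - d * f)) := by
    have h1 : (f * d - d * f) * d - d * (f * d - d * f) - (f * d - d * f)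
        = (2 : ℂ) • (d * f - d * f * d) := by
      have e1 : f * d * d = f * d := by rw [mul_assoc, hdd]
      have e2 : d * (d * f) = d * f := by rw [← mul_assoc, hdd]
      rw [sub_mul, mul_sub, e1, mul_assoc, two_smul]
      rw [e2]  -- now remains arithmetic
      abel
    rw [h1, smul_smul]
    norm_num
  rw [key]
  exact L.smul_mem _ (L.sub_mem hc2 hc)
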